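/- (Phillips' theorem) Let X_0, X_1, ..., X_d and Y_0, Y_1, ..., Y_d be N×N complex matrices such that X_i X_j = X_j X_i for all i, j, and Y_0 X_0 + Y_1 X_1 + ... + Y_d X_d = 0. Define p(z_0, z_1, ..., z_d) = det(z_0 Y_0 + z_1 Y_1 + ... + z_d Y_d). Then p(X_0, X_1, ..., X_d) = 0. -/

import Mathlib

open Matrix


/-- Evaluation of a multivariate polynomial at a (commuting) tuple of elements
of a ℂ-algebra, substituting `T j` for the variable `j`. -/
noncomputable def ncEval {d : ℕ} {A : Type*} [Ring A] [Algebra ℂ A]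
    (p : MvPolynomial (Fin d) ℂ) (T : Fin d → A) : A :=
  Finsupp.sum (AddMonoidAlgebra.coeff p) fun m c => c • (List.ofFn fun j : Fin d => T j ^ m j).prod

lemma ncEval_eq_aeval {d : ℕ} {A : Type*} [CommRing A] [Algebra ℂ A]
    (p : MvPolynomial (Fin d) ℂ) (T : Fin d → A) :
    ncEval p T = MvPolynomial.aeval T p := by
  rw [MvPolynomial.aeval_def, MvPolynomial.eval₂_eq, ncEval]
  rw [Finsupp.sum]
  apply Finset.sum_congr rfl
  intro m _
  rw [List.prod_ofFn, Algebra.smul_def]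
  congr 1
  rw [Finset.prod_subset (Finset.subset_univ m.support)]
  intro i _ hi
  simp [Finsupp.notMem_support_iff.mp hi]

lemma algHom_ncEval {d : ℕ} {A B : Type*} [Ring A] [Algebra ℂ A] [Ring B] [Algebra ℂ B]
    (f : A →ₐ[ℂ] B) (p : MvPolynomial (Fin d) ℂ) (T : Fin d → A) :
    f (ncEval p T) = ncEval p (fun j => f (T j)) := by
  rw [ncEval, map_finsuppSum, ncEval]
  apply Finsupp.sum_congr
  intro m _
  rw [_root_.map_smul, map_list_prod, List.map_ofFn]
  simp [Function.comp_def]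

lemma ncEval_transpose {d N : ℕ} (p : MvPolynomial (Fin d) ℂ)
    (X : Fin d → Matrix (Fin N) (Fin N) ℂ)
    (hcomm : ∀ i j, Commute (X i) (X j)) :
    (ncEval p (fun j => (X j)ᵀ))ᵀ = ncEval p X := by
  rw [ncEval, ncEval, Finsupp.sum, Finsupp.sum, Matrix.transpose_sum]
  apply Finset.sum_congr rfl
  intro m _
  rw [Matrix.transpose_smul, Matrix.transpose_list_prod, List.map_ofFn]
  congr 1
  rw [show (Matrix.transpose ∘ fun j => (X j)ᵀ ^ m j) = fun j => X j ^ m j by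
    funext j; simp [Function.comp, Matrix.transpose_pow]]
  refine ((List.reverse_perm _).prod_eq' ?_)
  rw [List.pairwise_reverse]
  rw [List.pairwise_ofFn]
  intro i j _
  exact (hcomm j i).pow_pow _ _


lemma phillips_aux {d N : ℕ} {B : Type*} [CommRing B] [Algebra ℂ B]
    (X Y : Fin (d + 1) → Matrix (Fin N) (Fin N) ℂ)
    (hXY : ∑ j, Y j * X j = 0)
    (f : B →ₐ[ℂ] Matrix (Fin N) (Fin N) ℂ)
    (t : Fin (d + 1) → B) (hft : ∀ j, f (t j) = (X j)ᵀ)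
    (p : MvPolynomial (Fin (d + 1)) ℂ)
    (hp : ∀ z : Fin (d + 1) → ℂ,
      MvPolynomial.eval z p = (∑ j, z j • Y j).det) :
    f (MvPolynomial.aeval t p) = 0 := by
  classical
  -- p equals the "generic" determinant polynomial q
  have hpq : p = (∑ j, (MvPolynomial.X j : MvPolynomial (Fin (d + 1)) ℂ) •
      (Y j).map MvPolynomial.C).det := by
    apply MvPolynomial.funext
    intro z
    rw [hp]
    have : ((∑ j, (MvPolynomial.X j : MvPolynomial (Fin (d + 1)) ℂ) •
        (Y j).map MvPolynomial.C).map (MvPolynomial.eval z)) = ∑ j, z j • Y j := by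
      ext a b
      simp [Matrix.map_apply, Matrix.sum_apply]
    rw [← this]
    exact ((MvPolynomial.eval z).map_det _).symm
  set M : Matrix (Fin N) (Fin N) B :=
    Matrix.of (fun a b => ∑ j, t j * algebraMap ℂ B (Y j a b)) with hM
  have haq : MvPolynomial.aeval t p = M.det := by
    rw [hpq, (MvPolynomial.aeval t).map_det]
    congr 1
    ext a b
    simp [hM, Matrix.map_apply, Matrix.sum_apply, Matrix.smul_apply, smul_eq_mul,
      _root_.map_mul, MvPolynomial.aeval_X, MvPolynomial.aeval_C]
  -- the kernel "vector" (over the matrix ring)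
  set W : Fin N → Matrix (Fin N) (Fin N) ℂ :=
    fun b => Matrix.of (fun c _ => if c = b then (1 : ℂ) else 0) with hW
  have hfM : ∀ a b, f (M a b) = ∑ j, (Y j a b) • (X j)ᵀ := by
    intro a b
    simp only [hM, Matrix.of_apply, map_sum, _root_.map_mul, hft, AlgHom.commutes,
      Algebra.algebraMap_eq_smul_one, mul_smul_comm, mul_one, _root_.map_smul]
  have hMW : (M.map ⇑f).mulVec W = 0 := by
    funext a
    ext c k
    have h0 : (∑ j, Y j * X j) a c = 0 := by rw [hXY]; rfl
    simp only [Matrix.mulVec, dotProduct, Matrix.map_apply, Pi.zero_apply,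
      Matrix.zero_apply, Matrix.sum_apply, hfM, Matrix.mul_apply, Matrix.smul_apply,
      Matrix.transpose_apply, hW, Matrix.of_apply, smul_eq_mul, mul_ite, mul_one, mul_zero,
      Finset.sum_ite_eq, Finset.sum_ite_eq', Finset.mem_univ, if_true]
    rw [← h0, Matrix.sum_apply]
    rw [Finset.sum_comm]
    apply Finset.sum_congr rfl
    intro j _
    rw [Matrix.mul_apply]
  have h2 : ∀ a, (f M.det) * W a = 0 := by
    intro a
    have h3 : ((M.adjugate.map ⇑f) * (M.map ⇑f)).mulVec W = 0 := by
      rw [← Matrix.mulVec_mulVec, hMW, Matrix.mulVec_zero]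
    have h4 : ((M.adjugate * M).map ⇑f).mulVec W = 0 := by
      rw [show (M.adjugate * M).map ⇑f = M.adjugate.map ⇑f * M.map ⇑f from
        Matrix.map_mul (f := f.toRingHom)]
      exact h3
    rw [Matrix.adjugate_mul] at h4
    have h5 := congrFun h4 a
    simpa [Matrix.mulVec, dotProduct, Matrix.map_apply, Matrix.smul_apply,
      Matrix.one_apply, smul_eq_mul, mul_ite, mul_one, mul_zero, apply_ite f, map_zero,
      Finset.sum_ite_eq, Finset.sum_ite_eq'] using h5
  have h6 : f M.det = 0 := by
    ext c a
    have h7 : ((f M.det) * W a) c c = 0 := by rw [h2 a]; rfl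
    simpa [Matrix.mul_apply, hW, mul_ite, mul_one, mul_zero,
      Finset.sum_ite_eq, Finset.sum_ite_eq'] using h7
  rw [haq]
  exact h6


/-- Phillips' theorem: if the `Xᵢ` commute pairwise and
`∑ⱼ Yⱼ Xⱼ = 0`, then `p(z) = det (∑ⱼ zⱼ Yⱼ)` annihilates `(X₀,…,X_d)`. -/
theorem stmt_5 (d N : ℕ)
    (X Y : Fin (d + 1) → Matrix (Fin N) (Fin N) ℂ)
    (hcomm : ∀ i j, Commute (X i) (X j))
    (hXY : ∑ j, Y j * X j = 0)
    (p : MvPolynomial (Fin (d + 1)) ℂ)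
    (hp : ∀ z : Fin (d + 1) → ℂ,
      MvPolynomial.eval z p = (∑ j, z j • Y j).det) :
    ncEval p X = 0 := by
  classical
  have hTc : ∀ a ∈ Set.range (fun j => (X j)ᵀ), ∀ b ∈ Set.range (fun j => (X j)ᵀ),
      a * b = b * a := by
    rintro _ ⟨i, rfl⟩ _ ⟨j, rfl⟩
    simp only
    rw [← Matrix.transpose_mul, ← Matrix.transpose_mul, (hcomm i j).eq]
  letI : CommRing (Algebra.adjoin ℂ (Set.range fun j => (X j)ᵀ)) :=
    Algebra.adjoinCommRingOfComm ℂ hTc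
  let t : Fin (d + 1) → (Algebra.adjoin ℂ (Set.range fun j => (X j)ᵀ)) :=
    fun j => ⟨(X j)ᵀ, Algebra.subset_adjoin ⟨j, rfl⟩⟩
  have key := phillips_aux X Y hXY
    (Algebra.adjoin ℂ (Set.range fun j => (X j)ᵀ)).val t (fun j => rfl) p hp
  have h1 : ncEval p X =
      ((Algebra.adjoin ℂ (Set.range fun j => (X j)ᵀ)).val (ncEval p t))ᵀ := by
    rw [algHom_ncEval]
    exact (ncEval_transpose p X hcomm).symm
  rw [h1, ncEval_eq_aeval, key]
  simp
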